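/- Let E be a locally cartesian closed category with a strict initial object. The class W of dense monomorphisms admits a calculus of right fractions; in particular W contains identities, is closed under composition, is stable under pullback, and satisfies the right Ore and right cancellability conditions needed for the localization E[W⁻¹] to be described by spans (w, f) with w ∈ W. -/
import Mathlib


open CategoryTheory CategoryTheory.Limits

universe v u

/-- A locally cartesian closed category: each pullback functor `Over.pullback p`
has a right adjoint `Π_p`. -/
class LCC (C : Type u) [Category.{v} C] [HasPullbacks C] where
  Pi : ∀ {X Y : C} (p : X ⟶ Y), Over X ⥤ Over Y
  adj : ∀ {X Y : C} (p : X ⟶ Y), Over.pullback p ⊣ Pi p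

variable {C : Type u} [Category.{v} C] [HasPullbacks C] [LCC C] [HasInitial C]

/-- The negation `¬p : B∖im p ⟶ B` of `p : E ⟶ B`, i.e. `Π_p (0 ⟶ E)`,
the right edge of the distributivity pullback around `0 ⟶ E` and `p`. -/
noncomputable def neg {E B : C} (p : E ⟶ B) : Over B :=
  (LCC.Pi p).obj (Over.mk (initial.to E))

/-- The double negation `¬¬p` of `p : E ⟶ B`. -/
noncomputable def nneg {E B : C} (p : E ⟶ B) : Over B := neg (neg p).hom

/-- The class of dense monomorphisms: monos whose negation has initial domain. -/
def denseMonos : MorphismProperty C :=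
  fun _ _ f => Mono f ∧ Nonempty (IsInitial ((neg f).left))

/-- If there is a morphism into an initial object (strict), the source is initial. -/
lemma initial_of_hom_aux [HasStrictInitialObjects C] {A X : C} (hX : IsInitial X)
    (f : A ⟶ X) : Nonempty (IsInitial A) := by
  haveI := hX.isIso_to f
  exact ⟨hX.ofIso (asIso f).symm⟩

/-- Auxiliary characterization of density. -/
def denseAux {E B : C} (f : E ⟶ B) : Prop :=
  ∀ {A : C} (a : A ⟶ B), Nonempty (IsInitial (pullback a f)) → Nonempty (IsInitial A)

lemma neg_initial_iff [HasStrictInitialObjects C] {E B : C} (f : E ⟶ B) :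
    Nonempty (IsInitial ((neg f).left)) ↔ denseAux f := by
  constructor
  · rintro ⟨h⟩ A a ⟨hp⟩
    have φ : (Over.pullback f).obj (Over.mk a) ⟶ Over.mk (initial.to E) :=
      Over.homMk (hp.to (⊥_ C)) (hp.hom_ext _ _)
    have ψ : Over.mk a ⟶ neg f :=
      ((LCC.adj f).homEquiv (Over.mk a) (Over.mk (initial.to E))) φ
    exact initial_of_hom_aux h ψ.left
  · intro hd
    have ε := (LCC.adj f).counit.app (Over.mk (initial.to E))
    exact hd (neg f).hom (initial_of_hom_aux initialIsInitial ε.left)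

lemma denseAux_id [HasStrictInitialObjects C] (B : C) : denseAux (𝟙 B) := by
  rintro A a ⟨hp⟩
  exact initial_of_hom_aux hp (pullback.lift (𝟙 A) a (by simp))

lemma denseAux_comp [HasStrictInitialObjects C] {X Y Z : C} (f : X ⟶ Y) (g : Y ⟶ Z)
    (hf : denseAux f) (hg : denseAux g) : denseAux (f ≫ g) := by
  rintro A a ⟨hp⟩
  apply hg a
  apply hf (pullback.snd a g)
  refine initial_of_hom_aux hp ?_
  refine pullback.lift (pullback.fst _ _ ≫ pullback.fst a g) (pullback.snd _ _) ?_
  rw [Category.assoc, pullback.condition, ← Category.assoc, pullback.condition,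
    Category.assoc]

lemma denseAux_pullback [HasStrictInitialObjects C] {P A Y B : C}
    (k : P ⟶ A) (d' : P ⟶ Y) (d : A ⟶ B) (g : Y ⟶ B)
    (sq : IsPullback k d' d g) (hd : denseAux d) : denseAux d' := by
  rintro A' a ⟨hp⟩
  apply hd (a ≫ g)
  refine initial_of_hom_aux hp ?_
  refine pullback.lift (pullback.fst _ _)
    (sq.lift (pullback.snd _ _) (pullback.fst _ _ ≫ a)
      (by rw [Category.assoc, ← pullback.condition])) ?_
  rw [sq.lift_snd]

lemma mono_pullback_aux {P A Y B : C} (k : P ⟶ A) (d' : P ⟶ Y) (d : A ⟶ B) (g : Y ⟶ B)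
    (sq : IsPullback k d' d g) (hd : Mono d) : Mono d' := by
  constructor
  intro Z u v h
  refine sq.hom_ext ?_ h
  have : (u ≫ k) ≫ d = (v ≫ k) ≫ d := by
    rw [Category.assoc, Category.assoc, sq.w, ← Category.assoc, h, Category.assoc]
  simpa using (cancel_mono d).1 this

/-- In a locally cartesian closed category with a strict initial object, the class `W` of
dense monomorphisms admits a calculus of right fractions (in particular it contains
identities, is closed under composition, and satisfies the right Ore and right
cancellability conditions), and is stable under pullback. -/
theorem denseMonos_calculus_of_right_fractions [HasStrictInitialObjects C] :
    (denseMonos (C := C)).HasRightCalculusOfFractions ∧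
      (∀ {P A Y B : C} (k : P ⟶ A) (d' : P ⟶ Y) (d : A ⟶ B) (g : Y ⟶ B),
        IsPullback k d' d g → denseMonos d → denseMonos d') := by
  have stab : ∀ {P A Y B : C} (k : P ⟶ A) (d' : P ⟶ Y) (d : A ⟶ B) (g : Y ⟶ B),
      IsPullback k d' d g → denseMonos d → denseMonos d' := by
    rintro P A Y B k d' d g sq ⟨hm, hi⟩
    exact ⟨mono_pullback_aux k d' d g sq hm,
      (neg_initial_iff d').2 (denseAux_pullback k d' d g sq ((neg_initial_iff d).1 hi))⟩
  have hmult : (denseMonos (C := C)).IsMultiplicative :=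
    { id_mem := fun X => ⟨inferInstance, (neg_initial_iff _).2 (denseAux_id X)⟩
      comp_mem := fun f g hf hg => by
        haveI := hf.1; haveI := hg.1
        exact ⟨mono_comp f g, (neg_initial_iff _).2
          (denseAux_comp f g ((neg_initial_iff f).1 hf.2) ((neg_initial_iff g).1 hg.2))⟩ }
  refine ⟨{ toIsMultiplicative := hmult
            exists_rightFraction := ?_
            ext := ?_ }, stab⟩
  · intro X Y φ
    refine ⟨{ s := pullback.fst φ.f φ.s
              hs := stab (pullback.snd φ.f φ.s) (pullback.fst φ.f φ.s) φ.s φ.f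
                (IsPullback.of_hasPullback φ.f φ.s).flip φ.hs
              f := pullback.snd φ.f φ.s }, pullback.condition⟩
  · intro X Y Y' f₁ f₂ s hs h
    haveI := hs.1
    exact ⟨X, 𝟙 X, hmult.id_mem X, by rw [(cancel_mono s).1 h]⟩
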